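/- Fix an integer b ≥ 2 and define M̂(x) := x + ((b−1)/2)x². Let x* > 1 denote the unique solution in (1, ∞) of 1 + x = e^{x/2}. Then for all K > 0, ℓ > 0, and r ∈ ℕ with (b−1)K/(2ℓ) ≤ x*, the r-fold iterate satisfies ℓ · M̂^r(K/ℓ) ≥ K · exp(r (b−1) K / (4ℓ)). -/
import Mathlib


open Filter Real

noncomputable section

/-- The quadratic map `M̂(x) = x + ((b-1)/2)x²`; its `r`-fold composition is `(Mhat b)^[r]`. -/
def Mhat (b : ℕ) (x : ℝ) : ℝ := x + ((b : ℝ) - 1) / 2 * x ^ 2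

lemma exp_half_le_aux (xstar : ℝ) (hx1 : 1 < xstar)
    (hx2 : 1 + xstar = Real.exp (xstar / 2)) :
    ∀ y : ℝ, 0 ≤ y → y ≤ xstar → Real.exp (y / 2) ≤ 1 + y := by
  intro y hy hyx
  have hxpos : 0 < xstar := lt_trans one_pos hx1
  set t := y / xstar with ht
  have ht0 : 0 ≤ t := div_nonneg hy hxpos.le
  have ht1 : t ≤ 1 := (div_le_one hxpos).2 hyx
  have key := convexOn_exp.2 (Set.mem_univ (0:ℝ)) (Set.mem_univ (xstar/2))
    (by linarith : (0:ℝ) ≤ 1 - t) ht0 (by ring)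
  have harg : (1-t) • (0:ℝ) + t • (xstar/2) = y/2 := by
    simp only [smul_eq_mul, mul_zero, zero_add, ht]
    field_simp
  have hrhs : (1-t) • Real.exp 0 + t • Real.exp (xstar/2) = 1 + y := by
    rw [Real.exp_zero, ← hx2]
    simp only [smul_eq_mul, mul_one, ht]
    field_simp
    ring
  rw [harg, hrhs] at key
  exact key

/-- **Iterate growth bound for `M̂`.** If `x* > 1` solves `1 + x = e^{x/2}`, then for all
`K > 0`, `ℓ > 0` and `r ∈ ℕ` with `(b-1)K/(2ℓ) ≤ x*`, one has
`ℓ · M̂^r(K/ℓ) ≥ K exp(r(b-1)K/(4ℓ))`. -/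
theorem Mhat_iterate_growth
    (b : ℕ) (hb : 2 ≤ b) (xstar : ℝ) (hx1 : 1 < xstar)
    (hx2 : 1 + xstar = Real.exp (xstar / 2)) :
    ∀ K L : ℝ, 0 < K → 0 < L → ∀ r : ℕ,
      ((b : ℝ) - 1) * K / (2 * L) ≤ xstar →
      K * Real.exp (r * ((b : ℝ) - 1) * K / (4 * L)) ≤ L * (Mhat b)^[r] (K / L) := by
  intro K L hK hL r hle
  have hb1 : (1:ℝ) ≤ (b:ℝ) - 1 := by
    have : (2:ℝ) ≤ (b:ℝ) := by exact_mod_cast hb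
    linarith
  set c : ℝ := ((b:ℝ) - 1) / 2 with hc
  have hc0 : 0 < c := by rw [hc]; linarith
  set x0 : ℝ := K / L with hx0def
  have hx0 : 0 < x0 := div_pos hK hL
  have hcx0 : c * x0 ≤ xstar := by
    have : c * x0 = ((b:ℝ) - 1) * K / (2 * L) := by
      rw [hc, hx0def]; field_simp
    linarith [this ▸ hle]
  have main : ∀ n : ℕ, x0 * Real.exp (n * (c * x0 / 2)) ≤ (Mhat b)^[n] x0 := by
    intro n
    induction n with
    | zero => simp
    | succ n ih =>
      set X := (Mhat b)^[n] x0 with hX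
      have hexp1 : (1:ℝ) ≤ Real.exp ((n:ℝ) * (c * x0 / 2)) :=
        Real.one_le_exp (by positivity)
      have hXx0 : x0 ≤ X := le_trans (by nlinarith) ih
      have hX0 : 0 < X := lt_of_lt_of_le hx0 hXx0
      have hexp : Real.exp (c * x0 / 2) ≤ 1 + c * X := by
        by_cases h : c * X ≤ xstar
        · have h2 := exp_half_le_aux xstar hx1 hx2 (c * X) (by positivity) h
          have h3 : Real.exp (c * x0 / 2) ≤ Real.exp (c * X / 2) :=
            Real.exp_le_exp.2 (by nlinarith)
          linarith
        · have h3 : Real.exp (c * x0 / 2) ≤ Real.exp (xstar / 2) :=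
            Real.exp_le_exp.2 (by linarith)
          rw [← hx2] at h3
          linarith
      rw [Function.iterate_succ_apply', ← hX]
      have hMX : Mhat b X = X * (1 + c * X) := by rw [Mhat, hc]; ring
      rw [hMX]
      have hsplit : x0 * Real.exp ((n + 1 : ℕ) * (c * x0 / 2))
          = (x0 * Real.exp ((n:ℝ) * (c * x0 / 2))) * Real.exp (c * x0 / 2) := by
        rw [mul_assoc, ← Real.exp_add]
        push_cast
        ring_nf
      rw [hsplit]
      have hep : 0 < Real.exp (c * x0 / 2) := Real.exp_pos _
      calc (x0 * Real.exp ((n:ℝ) * (c * x0 / 2))) * Real.exp (c * x0 / 2)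
          ≤ X * Real.exp (c * x0 / 2) := by
            apply mul_le_mul_of_nonneg_right ih hep.le
        _ ≤ X * (1 + c * X) := mul_le_mul_of_nonneg_left hexp hX0.le
  have hmr := main r
  have hKL : K = L * x0 := by rw [hx0def]; field_simp
  have hexpeq : (r:ℝ) * ((b:ℝ) - 1) * K / (4 * L) = (r:ℝ) * (c * x0 / 2) := by
    rw [hc, hx0def]; field_simp; ring
  rw [hexpeq]
  calc K * Real.exp ((r:ℝ) * (c * x0 / 2))
      = L * (x0 * Real.exp ((r:ℝ) * (c * x0 / 2))) := by rw [hKL]; ring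
    _ ≤ L * (Mhat b)^[r] x0 := mul_le_mul_of_nonneg_left hmr hL.le
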